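/- Let n, r ≥ 1 and j ≥ 0 be integers. If j ≤ r, then |ω_{n,r}(j) − e^{−1/n}/(j!·n^j)| < (1 + 2^{r−j})/(j!·n^j·(r−j)!). If j > r, then ω_{n,r}(j) = 0. -/

import Mathlib

open Finset

/-- The action of an element of the wreath product `C_n ≀ S_r` on `B(n,r)`. -/
def wAct (n r : ℕ) (σ : (Fin r → ZMod n) × Equiv.Perm (Fin r)) :
    ZMod n × Fin r → ZMod n × Fin r :=
  fun p => (σ.1 p.2 + p.1, σ.2 p.2)

/-- The number of fixed points of `σ ∈ C_n ≀ S_r` acting on `B(n,r)`. -/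
noncomputable def fixCount (n r : ℕ) (σ : (Fin r → ZMod n) × Equiv.Perm (Fin r)) : ℕ :=
  Nat.card {p : ZMod n × Fin r // wAct n r σ p = p}

/-- `ω_{n,r}(j)`: the proportion of elements `σ` of `C_n ≀ S_r` with exactly
`j·n` fixed points on `B(n,r)`. -/
noncomputable def omega (n r j : ℕ) : ℝ :=
  (Nat.card {σ : (Fin r → ZMod n) × Equiv.Perm (Fin r) // fixCount n r σ = j * n} : ℝ)
    / ((r.factorial * n ^ r : ℕ) : ℝ)

/-- The set of "good" indices of `σ`. -/
def FsAux (n r : ℕ) [NeZero n] (σ : (Fin r → ZMod n) × Equiv.Perm (Fin r)) : Finset (Fin r) :=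
  Finset.univ.filter fun i => σ.2 i = i ∧ σ.1 i = 0

lemma fixCount_eq (n r : ℕ) [NeZero n] (σ : (Fin r → ZMod n) × Equiv.Perm (Fin r)) :
    fixCount n r σ = n * (FsAux n r σ).card := by
  have e : {p : ZMod n × Fin r // wAct n r σ p = p}
      ≃ ZMod n × {i : Fin r // σ.2 i = i ∧ σ.1 i = 0} := by
    refine ⟨fun p => (p.1.1, ⟨p.1.2, ?_, ?_⟩), fun q => ⟨(q.1, q.2.1), ?_⟩, ?_, ?_⟩
    · have := congrArg Prod.snd p.2; simpa [wAct] using this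
    · have := congrArg Prod.fst p.2
      simp only [wAct] at this
      have h2 : σ.1 p.1.2 + p.1.1 = p.1.1 := this
      have := add_right_cancel (b := p.1.1) (a := σ.1 p.1.2) (c := 0) (by simpa using h2)
      simpa using h2
    · obtain ⟨q1, q2⟩ := q
      simp [wAct, q2.2.1, q2.2.2]
    · intro p; ext <;> simp
    · intro q; simp
  rw [fixCount, Nat.card_congr e, Nat.card_eq_fintype_card, Fintype.card_prod, ZMod.card,
    Fintype.card_subtype]
  rfl

lemma card_filter_subset (n r : ℕ) [NeZero n] (T : Finset (Fin r)) :
    (Finset.univ.filter fun σ : (Fin r → ZMod n) × Equiv.Perm (Fin r) => T ⊆ FsAux n r σ).card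
      = (r - T.card).factorial * n ^ (r - T.card) := by
  have hiff : ∀ σ : (Fin r → ZMod n) × Equiv.Perm (Fin r),
      T ⊆ FsAux n r σ ↔ ((∀ i ∈ T, σ.1 i = 0) ∧ (∀ i ∈ T, σ.2 i = i)) := by
    intro σ
    constructor
    · intro h
      constructor <;> intro i hi <;> have := h hi <;> simp [FsAux] at this <;> tauto
    · intro h i hi
      simp [FsAux, h.1 i hi, h.2 i hi]
  rw [Finset.filter_congr (fun σ _ => by rw [hiff])]
  rw [← Finset.univ_product_univ, Finset.filter_product
    (fun f : Fin r → ZMod n => ∀ i ∈ T, f i = 0)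
    (fun π : Equiv.Perm (Fin r) => ∀ i ∈ T, π i = i), Finset.card_product]
  have hA : (Finset.univ.filter fun f : Fin r → ZMod n => ∀ i ∈ T, f i = 0).card
      = n ^ (r - T.card) := by
    have h1 : (Finset.univ.filter fun f : Fin r → ZMod n => ∀ i ∈ T, f i = 0)
        = Fintype.piFinset (fun i => if i ∈ T then {0} else Finset.univ) := by
      ext f
      simp only [mem_filter, mem_univ, true_and, Fintype.mem_piFinset]
      constructor
      · intro h i
        by_cases hi : i ∈ T <;> simp [hi, h i]
      · intro h i hi
        have := h i
        simpa [hi] using this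
    rw [h1, Fintype.card_piFinset]
    calc ∏ i : Fin r, ((if i ∈ T then ({0} : Finset (ZMod n)) else Finset.univ).card)
        = ∏ i : Fin r, (if i ∈ T then 1 else n) := by
          apply Finset.prod_congr rfl; intro i _; by_cases hi : i ∈ T <;> simp [hi, ZMod.card]
      _ = n ^ (r - T.card) := by
          rw [Finset.prod_ite, Finset.prod_const_one, Finset.prod_const, one_mul]
          have h : Finset.univ.filter (fun i : Fin r => ¬ i ∈ T) = Tᶜ := by ext i; simp
          rw [h, Finset.card_compl, Fintype.card_fin]
  have hB : (Finset.univ.filter fun π : Equiv.Perm (Fin r) => ∀ i ∈ T, π i = i).card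
      = (r - T.card).factorial := by
    rw [← Fintype.card_subtype]
    have e : {π : Equiv.Perm (Fin r) // ∀ i ∈ T, π i = i} ≃ Equiv.Perm {i : Fin r // i ∉ T} := by
      refine (Equiv.subtypeEquiv (Equiv.refl _) ?_).trans
        (Equiv.Perm.subtypeEquivSubtypePerm (fun i => i ∉ T)).symm
      intro π
      simp only [Equiv.refl_apply]
      constructor
      · intro h a ha; exact h a (not_not.mp ha)
      · intro h i hi; exact h i (not_not.mpr hi)
    rw [Fintype.card_congr e, Fintype.card_perm]
    congr 1
    simp [Fintype.card_subtype_compl]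
  rw [hA, hB, mul_comm]

lemma delta_sum (s j : ℕ) :
    ∑ m ∈ range (s + 1), (s.choose m) • ((-1 : ℝ) ^ (m + j) * (m.choose j))
      = if s = j then 1 else 0 := by
  rcases lt_or_ge s j with h | h
  · rw [if_neg (by omega)]
    apply Finset.sum_eq_zero
    intro m hm
    rw [mem_range] at hm
    rw [Nat.choose_eq_zero_of_lt (show m < j by omega)]
    simp
  · have hsplit : s + 1 = j + (s - j + 1) := by omega
    rw [hsplit, Finset.sum_range_add]
    have h1 : ∑ m ∈ range j, (s.choose m) • ((-1 : ℝ) ^ (m + j) * (m.choose j)) = 0 := by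
      apply Finset.sum_eq_zero
      intro m hm
      rw [mem_range] at hm
      rw [Nat.choose_eq_zero_of_lt (show m < j by omega)]
      simp
    rw [h1, zero_add]
    have h2 : ∀ u ∈ range (s - j + 1),
        (s.choose (j + u)) • ((-1 : ℝ) ^ (j + u + j) * ((j + u).choose j))
          = (s.choose j : ℝ) * ((-1) ^ u * ((s - j).choose u)) := by
      intro u hu
      rw [mem_range] at hu
      have hc : s.choose (j + u) * (j + u).choose j = s.choose j * (s - j).choose u := by
        have := Nat.choose_mul (n := s) (k := j + u) (s := j) (by omega)
        simpa using this
      have hsgn : (-1 : ℝ) ^ (j + u + j) = (-1) ^ u := by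
        have : j + u + j = 2 * j + u := by omega
        rw [this, pow_add, pow_mul]
        simp
      rw [hsgn, nsmul_eq_mul]
      have := congrArg (fun x : ℕ => (x : ℝ)) hc
      push_cast at this ⊢
      linear_combination ((-1 : ℝ) ^ u) * this
    rw [Finset.sum_congr rfl h2, ← Finset.mul_sum]
    have h3 : ∑ u ∈ range (s - j + 1), ((-1 : ℝ) ^ u * ((s - j).choose u))
        = if s - j = 0 then 1 else 0 := by
      have := Int.alternating_sum_range_choose (n := s - j)
      have := congrArg (fun x : ℤ => (x : ℝ)) this
      push_cast at this
      convert this using 2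
    rw [h3]
    rcases eq_or_ne s j with rfl | hne
    · simp
    · rw [if_neg (by omega), if_neg hne, mul_zero]

lemma cnt_real (n r j : ℕ) [NeZero n] :
    ((Finset.univ.filter fun σ : (Fin r → ZMod n) × Equiv.Perm (Fin r) =>
        (FsAux n r σ).card = j).card : ℝ)
      = ∑ t ∈ range (r + 1), (r.choose t) •
          ((-1 : ℝ) ^ (t + j) * (t.choose j) * (((r - t).factorial * n ^ (r - t) : ℕ) : ℝ)) := by
  have step1 : ((Finset.univ.filter fun σ : (Fin r → ZMod n) × Equiv.Perm (Fin r) =>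
      (FsAux n r σ).card = j).card : ℝ)
      = ∑ σ : (Fin r → ZMod n) × Equiv.Perm (Fin r),
          ∑ T ∈ (FsAux n r σ).powerset, ((-1 : ℝ) ^ (T.card + j) * (T.card.choose j)) := by
    rw [Finset.card_filter]
    push_cast
    apply Finset.sum_congr rfl
    intro σ _
    rw [Finset.sum_powerset_apply_card (fun m => ((-1 : ℝ) ^ (m + j) * (m.choose j))),
      delta_sum]
  rw [step1]
  have step2 : ∀ σ : (Fin r → ZMod n) × Equiv.Perm (Fin r),
      ∑ T ∈ (FsAux n r σ).powerset, ((-1 : ℝ) ^ (T.card + j) * (T.card.choose j))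
      = ∑ T : Finset (Fin r),
          if T ⊆ FsAux n r σ then ((-1 : ℝ) ^ (T.card + j) * (T.card.choose j)) else 0 := by
    intro σ
    rw [← Finset.sum_filter]
    congr 1
    ext T
    simp [Finset.mem_powerset]
  rw [Finset.sum_congr rfl (fun σ _ => step2 σ), Finset.sum_comm]
  have step3 : ∀ T : Finset (Fin r),
      (∑ σ : (Fin r → ZMod n) × Equiv.Perm (Fin r),
        if T ⊆ FsAux n r σ then ((-1 : ℝ) ^ (T.card + j) * (T.card.choose j)) else 0)
      = ((-1 : ℝ) ^ (T.card + j) * (T.card.choose j)) *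
          (((r - T.card).factorial * n ^ (r - T.card) : ℕ) : ℝ) := by
    intro T
    rw [Finset.sum_ite, Finset.sum_const_zero, add_zero, Finset.sum_const, nsmul_eq_mul,
      card_filter_subset n r T, mul_comm]
  rw [Finset.sum_congr rfl (fun T _ => step3 T)]
  have : (Finset.univ : Finset (Finset (Fin r))) = (Finset.univ : Finset (Fin r)).powerset := by
    rw [Finset.powerset_univ]
  rw [this, Finset.sum_powerset_apply_card
    (fun m => ((-1 : ℝ) ^ (m + j) * (m.choose j)) * (((r - m).factorial * n ^ (r - m) : ℕ) : ℝ))]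
  simp [Finset.card_univ]

lemma term_eq (n r j k : ℕ) [NeZero n] (hj : j ≤ r) (hk : k ≤ r - j) :
    ((r.choose (j + k)) • ((-1 : ℝ) ^ ((j + k) + j) * ((j + k).choose j)
        * (((r - (j + k)).factorial * n ^ (r - (j + k)) : ℕ) : ℝ))) / ((r.factorial * n ^ r : ℕ) : ℝ)
      = (1 / ((j.factorial : ℝ) * (n : ℝ) ^ j)) * ((-(1 / (n : ℝ))) ^ k / (k.factorial : ℝ)) := by
  have hn0 : (0 : ℝ) < (n : ℝ) := by
    have := Nat.pos_of_ne_zero (NeZero.ne n); exact_mod_cast this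
  have h1 := Nat.choose_mul_factorial_mul_factorial (show j ≤ j + k by omega)
  rw [show j + k - j = k by omega] at h1
  have h2 := Nat.choose_mul_factorial_mul_factorial (show j + k ≤ r by omega)
  have h : r.choose (j + k) * ((j + k).choose j) * ((r - (j + k)).factorial)
      * (j.factorial * k.factorial) = r.factorial := by
    rw [← h2, ← h1]; ring
  have hcast := congrArg (Nat.cast : ℕ → ℝ) h
  push_cast at hcast
  have hnr : (n : ℝ) ^ r = (n : ℝ) ^ j * (n : ℝ) ^ k * (n : ℝ) ^ (r - (j + k)) := by
    rw [← pow_add, ← pow_add]; congr 1; omega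
  have hsgn : (-1 : ℝ) ^ ((j + k) + j) = (-1) ^ k := by
    rw [show (j + k) + j = 2 * j + k by omega, pow_add, pow_mul]; simp
  rw [nsmul_eq_mul]
  push_cast
  have hrx : (-(1 / (n:ℝ))) ^ k = (-1 : ℝ) ^ k * (1 / (n:ℝ) ^ k) := by
    rw [neg_pow, div_pow, one_pow]
  rw [hsgn, hrx]
  have hne : (n : ℝ) ≠ 0 := ne_of_gt hn0
  have hf1 : (j.factorial : ℝ) ≠ 0 := by positivity
  have hf2 : (k.factorial : ℝ) ≠ 0 := by positivity
  have hf3 : ((r - (j + k)).factorial : ℝ) ≠ 0 := by positivity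
  have hfr : (r.factorial : ℝ) ≠ 0 := by positivity
  field_simp
  rw [hnr]
  ring_nf
  linear_combination ((n:ℝ)^j * (n:ℝ)^k * (n:ℝ)^(r - (j+k))) * hcast

lemma tail_bound (x : ℝ) (hx0 : 0 < x) (hx1 : x ≤ 1) (m : ℕ) :
    |(∑ k ∈ range (m + 1), (-x) ^ k / (k.factorial : ℝ)) - Real.exp (-x)|
      < (1 + 2 ^ m) / (m.factorial : ℝ) := by
  rcases Nat.eq_zero_or_pos m with rfl | hm
  · rw [Finset.sum_range_one]
    simp only [pow_zero, Nat.factorial_zero, Nat.cast_one, div_one]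
    have h1 : Real.exp (-x) < 1 := by
      rw [Real.exp_lt_one_iff]; linarith
    have h2 : 0 < Real.exp (-x) := Real.exp_pos _
    rw [abs_of_pos (by linarith)]
    norm_num
    linarith
  · have hb := Real.exp_bound (x := -x) (by rw [abs_neg, abs_of_pos hx0]; exact hx1)
      (Nat.succ_pos m)
    rw [abs_sub_comm]
    rw [abs_neg, abs_of_pos hx0] at hb
    have hfm : (0 : ℝ) < (m.factorial : ℝ) := by positivity
    have hmR : (1 : ℝ) ≤ (m : ℝ) := by exact_mod_cast hm
    have h2m : (2 : ℝ) ≤ 2 ^ m := by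
      calc (2 : ℝ) = 2 ^ 1 := (pow_one 2).symm
        _ ≤ 2 ^ m := pow_le_pow_right₀ one_le_two hm
    have hfs : ((m.succ.factorial : ℕ) : ℝ) = ((m : ℝ) + 1) * (m.factorial : ℝ) := by
      rw [Nat.factorial_succ]; push_cast; ring
    have hb2 : |Real.exp (-x) - ∑ k ∈ range m.succ, (-x) ^ k / (k.factorial : ℝ)|
        ≤ ((m : ℝ) + 2) / (((m : ℝ) + 1) * (m.factorial : ℝ) * ((m : ℝ) + 1)) := by
      refine le_trans hb ?_
      have hxp : x ^ m.succ ≤ 1 := pow_le_one₀ (le_of_lt hx0) hx1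
      have hD : (0 : ℝ) ≤ ((m.succ.succ : ℕ) : ℝ) / (((m.succ.factorial : ℕ) : ℝ) * ((m.succ : ℕ) : ℝ)) := by
        positivity
      calc x ^ m.succ * (((m.succ.succ : ℕ) : ℝ) / (((m.succ.factorial : ℕ) : ℝ) * ((m.succ : ℕ) : ℝ)))
          ≤ 1 * (((m.succ.succ : ℕ) : ℝ) / (((m.succ.factorial : ℕ) : ℝ) * ((m.succ : ℕ) : ℝ))) :=
            mul_le_mul_of_nonneg_right hxp hD
        _ = ((m : ℝ) + 2) / (((m : ℝ) + 1) * (m.factorial : ℝ) * ((m : ℝ) + 1)) := by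
            rw [one_mul, hfs]; push_cast; ring_nf
    refine lt_of_le_of_lt hb2 ?_
    rw [div_lt_div_iff₀ (by positivity) hfm]
    have e1 : ((m : ℝ) + 2) ≤ ((m : ℝ) + 1) * ((m : ℝ) + 1) := by nlinarith
    have hpos : (0 : ℝ) < ((m : ℝ) + 1) * (m.factorial : ℝ) * ((m : ℝ) + 1) := by positivity
    nlinarith [mul_le_mul_of_nonneg_right e1 hfm.le, hpos]


lemma omega_eq (n r j : ℕ) [NeZero n] (hj : j ≤ r) :
    omega n r j = (1 / ((j.factorial : ℝ) * (n : ℝ) ^ j)) *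
      ∑ k ∈ range (r - j + 1), (-(1 / (n : ℝ))) ^ k / (k.factorial : ℝ) := by
  have hcard : Nat.card {σ : (Fin r → ZMod n) × Equiv.Perm (Fin r) // fixCount n r σ = j * n}
      = (Finset.univ.filter fun σ : (Fin r → ZMod n) × Equiv.Perm (Fin r) =>
          (FsAux n r σ).card = j).card := by
    rw [Nat.card_eq_fintype_card, Fintype.card_subtype]
    congr 1
    apply Finset.filter_congr
    intro σ _
    rw [fixCount_eq, mul_comm j n]
    exact mul_right_inj' (NeZero.ne n)
  rw [omega, hcard, cnt_real n r j]
  rw [show r + 1 = j + (r - j + 1) by omega, Finset.sum_range_add]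
  have hz : ∑ t ∈ range j, (r.choose t) •
      ((-1 : ℝ) ^ (t + j) * (t.choose j) * (((r - t).factorial * n ^ (r - t) : ℕ) : ℝ)) = 0 := by
    apply Finset.sum_eq_zero
    intro t ht
    rw [mem_range] at ht
    rw [Nat.choose_eq_zero_of_lt (show t < j by omega)]
    simp
  rw [hz, zero_add, Finset.sum_div, Finset.mul_sum]
  apply Finset.sum_congr rfl
  intro k hk
  rw [mem_range] at hk
  exact term_eq n r j k hj (by omega)

lemma omega_zero (n r j : ℕ) [NeZero n] (hjr : r < j) : omega n r j = 0 := by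
  have hE : IsEmpty {σ : (Fin r → ZMod n) × Equiv.Perm (Fin r) // fixCount n r σ = j * n} := by
    constructor
    rintro ⟨σ, hσ⟩
    rw [fixCount_eq] at hσ
    have h1 : (FsAux n r σ).card ≤ r := by
      simpa using Finset.card_le_univ (FsAux n r σ)
    have hn := Nat.pos_of_ne_zero (NeZero.ne n)
    have : n * (FsAux n r σ).card < j * n := by
      calc n * (FsAux n r σ).card ≤ n * r := Nat.mul_le_mul_left _ h1
        _ < n * j := Nat.mul_lt_mul_of_le_of_lt (le_refl n) hjr (by omega)
        _ = j * n := mul_comm n j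
    omega
  rw [omega, Nat.card_of_isEmpty]
  simp

theorem stmt5 (n r j : ℕ) (hn : 1 ≤ n) (hr : 1 ≤ r) :
    (j ≤ r →
      |omega n r j - Real.exp (-(1 / (n : ℝ))) / ((j.factorial : ℝ) * (n : ℝ) ^ j)|
        < (1 + 2 ^ (r - j)) / ((j.factorial : ℝ) * (n : ℝ) ^ j * ((r - j).factorial : ℝ))) ∧
    (j > r → omega n r j = 0) := by
  haveI : NeZero n := ⟨by omega⟩
  have hnR : (0 : ℝ) < (n : ℝ) := by exact_mod_cast (show 0 < n by omega)
  constructor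
  · intro hj
    have hx0 : (0 : ℝ) < 1 / (n : ℝ) := by positivity
    have hx1 : 1 / (n : ℝ) ≤ 1 := by
      rw [div_le_one hnR]
      exact_mod_cast hn
    have hD : (0 : ℝ) < (j.factorial : ℝ) * (n : ℝ) ^ j := by positivity
    rw [omega_eq n r j hj]
    have key := tail_bound (1 / (n : ℝ)) hx0 hx1 (r - j)
    have heq : (1 / ((j.factorial : ℝ) * (n : ℝ) ^ j)) *
          (∑ k ∈ range (r - j + 1), (-(1 / (n : ℝ))) ^ k / (k.factorial : ℝ))
        - Real.exp (-(1 / (n : ℝ))) / ((j.factorial : ℝ) * (n : ℝ) ^ j)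
        = (1 / ((j.factorial : ℝ) * (n : ℝ) ^ j)) *
          ((∑ k ∈ range (r - j + 1), (-(1 / (n : ℝ))) ^ k / (k.factorial : ℝ))
            - Real.exp (-(1 / (n : ℝ)))) := by ring
    rw [heq, abs_mul, abs_of_pos (by positivity : (0:ℝ) < 1 / ((j.factorial : ℝ) * (n : ℝ) ^ j))]
    have hfin : (1 / ((j.factorial : ℝ) * (n : ℝ) ^ j)) * ((1 + 2 ^ (r - j)) / ((r - j).factorial : ℝ))
        = (1 + 2 ^ (r - j)) / ((j.factorial : ℝ) * (n : ℝ) ^ j * ((r - j).factorial : ℝ)) := by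
      field_simp
    calc (1 / ((j.factorial : ℝ) * (n : ℝ) ^ j)) *
          |(∑ k ∈ range (r - j + 1), (-(1 / (n : ℝ))) ^ k / (k.factorial : ℝ))
            - Real.exp (-(1 / (n : ℝ)))|
        < (1 / ((j.factorial : ℝ) * (n : ℝ) ^ j)) * ((1 + 2 ^ (r - j)) / ((r - j).factorial : ℝ)) := by
          apply mul_lt_mul_of_pos_left key (by positivity)
      _ = (1 + 2 ^ (r - j)) / ((j.factorial : ℝ) * (n : ℝ) ^ j * ((r - j).factorial : ℝ)) := hfin
  · intro hjr
    exact omega_zero n r j hjr
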